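/- Let T ∈ (0,1], a ∈ (0,1/2), and b, c ≥ 0. Suppose f : [0,T] → ℝ is continuous, uniformly bounded by 1, and satisfies |f(t) - f(0)| ≤ b·t + c·(∫₀ᵗ |f(s)| ds)^a for all t ∈ [0,T]. Then for any ξ' ∈ (0,1) and N' ∈ ℕ with Σ_{j=1}^{N'} a^j ≤ ξ' < Σ_{j=1}^{N'+1} a^j, we have for all t ∈ [0,T]: |f(t) - f(0)| ≤ [(c^{1/(1-a)} + 1) Σ_{j=1}^{N'} |f(0)|^{a^j}] t^a + [b + (c^{1/(1-a)} + 1) Σ_{j=1}^{N'} (b/2)^{a^j} + c^{1/(1-a)} + 1] t^{ξ'}. -/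

import Mathlib

set_option maxHeartbeats 1000000
open MeasureTheory
open scoped NNReal

private lemma rpow_add_le_aux {x y p : ℝ} (hx : 0 ≤ x) (hy : 0 ≤ y) (hp : 0 ≤ p) (hp1 : p ≤ 1) :
    (x + y) ^ p ≤ x ^ p + y ^ p := by
  have h := NNReal.rpow_add_le_add_rpow x.toNNReal y.toNNReal hp hp1
  rw [← NNReal.coe_le_coe] at h
  push_cast at h
  rwa [Real.coe_toNNReal x hx, Real.coe_toNNReal y hy] at h

private lemma sum_rpow_le_aux {ι : Type*} (s : Finset ι) (g : ι → ℝ) {p : ℝ}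
    (hp0 : 0 < p) (hp1 : p ≤ 1) :
    (∀ i ∈ s, 0 ≤ g i) → (∑ i ∈ s, g i) ^ p ≤ ∑ i ∈ s, g i ^ p := by
  induction s using Finset.cons_induction with
  | empty => intro _; simp [Real.zero_rpow hp0.ne']
  | cons i s hi ih =>
    intro hg
    rw [Finset.sum_cons, Finset.sum_cons]
    have h1 : 0 ≤ g i := hg i (Finset.mem_cons_self _ _)
    have h2 : ∀ j ∈ s, 0 ≤ g j := fun j hj => hg j (Finset.mem_cons_of_mem hj)
    calc (g i + ∑ j ∈ s, g j) ^ p ≤ g i ^ p + (∑ j ∈ s, g j) ^ p :=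
          rpow_add_le_aux h1 (Finset.sum_nonneg h2) hp0.le hp1
      _ ≤ g i ^ p + ∑ j ∈ s, g j ^ p := add_le_add (le_refl _) (ih h2)

private lemma sum_Icc_conv (N : ℕ) (g : ℕ → ℝ) :
    ∑ j ∈ Finset.Icc 1 N, g j = ∑ j ∈ Finset.range N, g (j + 1) := by
  rw [← Finset.Ico_add_one_right_eq_Icc, Finset.sum_Ico_eq_sum_range]
  exact Finset.sum_congr rfl fun i _ => by rw [Nat.add_comm]

theorem stmt0 (T a b c : ℝ) (hT : T ∈ Set.Ioc (0:ℝ) 1)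
    (ha : a ∈ Set.Ioo (0:ℝ) (1/2)) (hb : 0 ≤ b) (hc : 0 ≤ c)
    (f : ℝ → ℝ) (hcont : ContinuousOn f (Set.Icc 0 T))
    (hbdd : ∀ t ∈ Set.Icc (0:ℝ) T, |f t| ≤ 1)
    (hineq : ∀ t ∈ Set.Icc (0:ℝ) T,
      |f t - f 0| ≤ b * t + c * (∫ s in (0:ℝ)..t, |f s|) ^ a)
    (ξ' : ℝ) (N' : ℕ) (hξ : ξ' ∈ Set.Ioo (0:ℝ) 1)
    (hN1 : ∑ j ∈ Finset.Icc 1 N', a ^ j ≤ ξ')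
    (hN2 : ξ' < ∑ j ∈ Finset.Icc 1 (N' + 1), a ^ j) :
    ∀ t ∈ Set.Icc (0:ℝ) T,
      |f t - f 0| ≤
        ((c ^ ((1:ℝ) / (1 - a)) + 1) * ∑ j ∈ Finset.Icc 1 N', |f 0| ^ (a ^ j)) * t ^ a
        + (b + (c ^ ((1:ℝ) / (1 - a)) + 1) * (∑ j ∈ Finset.Icc 1 N', (b / 2) ^ (a ^ j))
            + c ^ ((1:ℝ) / (1 - a)) + 1) * t ^ ξ' := by
  obtain ⟨hT0, hT1⟩ := hT
  obtain ⟨ha0, ha2⟩ := ha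
  have ha1 : a < 1 := by linarith
  have hF : (0:ℝ) ≤ |f 0| := abs_nonneg _
  set F : ℝ := |f 0| with hFdef
  set D : ℝ := c ^ ((1:ℝ) / (1 - a)) + 1 with hDdef
  have hDc : 0 ≤ c ^ ((1:ℝ) / (1 - a)) := Real.rpow_nonneg hc _
  have hD1 : (1:ℝ) ≤ D := by rw [hDdef]; linarith
  have hD0 : (0:ℝ) < D := lt_of_lt_of_le one_pos hD1
  have hcD : c ≤ D := by
    rcases le_or_gt c 1 with h | h
    · linarith
    · have h1 : c ^ (1:ℝ) ≤ c ^ ((1:ℝ) / (1 - a)) := by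
        apply Real.rpow_le_rpow_of_exponent_le h.le
        rw [le_div_iff₀ (by linarith)]
        nlinarith
      rw [Real.rpow_one] at h1
      rw [hDdef]; linarith
  have hcDa : c * D ^ a ≤ D := by
    have hDa0 : 0 ≤ D ^ a := Real.rpow_nonneg hD0.le _
    rcases le_or_gt c 1 with h | h
    · have h1 : D ^ a ≤ D ^ (1:ℝ) := Real.rpow_le_rpow_of_exponent_le hD1 ha1.le
      rw [Real.rpow_one] at h1
      nlinarith
    · have hkey : c ≤ D ^ (1 - a) := by
        have h1 : c ^ ((1:ℝ) / (1 - a)) ≤ D := by rw [hDdef]; linarith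
        have h2 : (c ^ ((1:ℝ) / (1 - a))) ^ (1 - a) ≤ D ^ (1 - a) :=
          Real.rpow_le_rpow (Real.rpow_nonneg hc _) h1 (by linarith)
        rwa [← Real.rpow_mul hc, one_div_mul_cancel (by linarith : (1:ℝ) - a ≠ 0),
          Real.rpow_one] at h2
      have h2 : c * D ^ a ≤ D ^ (1 - a) * D ^ a := by nlinarith
      have h3 : D ^ (1 - a) * D ^ a = D := by
        rw [← Real.rpow_add hD0]; norm_num
      linarith
  set ξ : ℕ → ℝ := fun n => ∑ i ∈ Finset.range n, a ^ (i + 1) with hξdef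
  have hξnn : ∀ n, 0 ≤ ξ n := fun n =>
    Finset.sum_nonneg fun i _ => pow_nonneg ha0.le _
  have hξone : ξ 1 = a := by simp [hξdef]
  have hξstep : ∀ n, ξ (n + 1) = a + a * ξ n := by
    intro n
    simp only [hξdef]
    rw [Finset.sum_range_succ' (fun i => a ^ (i + 1)) n, Finset.mul_sum]
    simp only [pow_succ, pow_zero, one_mul]
    rw [add_comm]
    congr 1
    exact Finset.sum_congr rfl fun i _ => by ring
  have hξa : ∀ n, a ≤ ξ (n + 1) := by
    intro n
    rw [hξstep]
    nlinarith [hξnn n]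
  have hξapos : ∀ n, 0 < ξ (n + 1) := fun n => lt_of_lt_of_le ha0 (hξa n)
  have hgeom : ∀ k, ∑ i ∈ Finset.range k, a ^ i ≤ 2 := by
    intro k
    rw [geom_sum_eq (by linarith : a ≠ 1) k, div_le_iff_of_neg (by linarith : a - 1 < 0)]
    nlinarith [pow_nonneg ha0.le k]
  have htail : ∀ m, m ≤ N' → ξ (N' + 1) ≤ ξ m + a ^ m := by
    intro m hm
    have hsplit : ξ (N' + 1) = ξ m + ∑ i ∈ Finset.Ico m (N' + 1), a ^ (i + 1) := by
      simp only [hξdef, Finset.range_eq_Ico]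
      exact (Finset.sum_Ico_consecutive _ (Nat.zero_le m) (by omega : m ≤ N' + 1)).symm
    have htail2 : ∑ i ∈ Finset.Ico m (N' + 1), a ^ (i + 1) ≤ a ^ m := by
      rw [Finset.sum_Ico_eq_sum_range]
      have h1 : ∀ i, a ^ (m + i + 1) = (a ^ (m + 1)) * a ^ i := fun i => by ring
      rw [Finset.sum_congr rfl fun i _ => h1 i, ← Finset.mul_sum]
      have h2 := hgeom (N' + 1 - m)
      have h3 : 0 ≤ a ^ (m + 1) := pow_nonneg ha0.le _
      have h4 : a ^ (m + 1) * ∑ i ∈ Finset.range (N' + 1 - m), a ^ i ≤ a ^ (m + 1) * 2 := by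
        nlinarith [Finset.sum_nonneg (fun i (_ : i ∈ Finset.range (N' + 1 - m)) =>
          pow_nonneg ha0.le i)]
      have h5 : a ^ (m + 1) * 2 ≤ a ^ m := by
        have he : a ^ (m + 1) = a ^ m * a := by ring
        rw [he]
        nlinarith [pow_nonneg ha0.le m]
      linarith
    rw [hsplit]
    linarith
  have hintf : ∀ t ∈ Set.Icc (0:ℝ) T, IntervalIntegrable (fun s => |f s|) volume 0 t := by
    intro t ht
    apply ContinuousOn.intervalIntegrable
    apply ContinuousOn.abs
    apply hcont.mono
    rw [Set.uIcc_of_le ht.1]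
    exact Set.Icc_subset_Icc le_rfl ht.2
  have key : ∀ n, ∀ t ∈ Set.Icc (0:ℝ) T,
      |f t - f 0| ≤ b * t
        + D * ∑ j ∈ Finset.range n, F ^ (a ^ (j + 1)) * t ^ (ξ (j + 1))
        + D * ∑ j ∈ Finset.range n, (b / 2) ^ (a ^ (j + 1)) * t ^ (ξ (j + 1) + a ^ (j + 1))
        + D * t ^ (ξ (n + 1)) := by
    intro n
    induction n with
    | zero =>
      intro t ht
      obtain ⟨ht0, htT⟩ := ht
      simp only [Finset.range_zero, Finset.sum_empty, mul_zero, add_zero, Nat.zero_add]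
      have h0 : 0 ≤ ∫ s in (0:ℝ)..t, |f s| :=
        intervalIntegral.integral_nonneg ht0 fun s _ => abs_nonneg _
      have h1 : ∫ s in (0:ℝ)..t, |f s| ≤ t := by
        have h2 := intervalIntegral.integral_mono_on ht0 (hintf t ⟨ht0, htT⟩)
          intervalIntegrable_const (fun s hs => hbdd s ⟨hs.1, hs.2.trans htT⟩)
        simpa using h2
      have h2 : (∫ s in (0:ℝ)..t, |f s|) ^ a ≤ t ^ a := Real.rpow_le_rpow h0 h1 ha0.le
      have h3 := hineq t ⟨ht0, htT⟩
      have h4 : c * (∫ s in (0:ℝ)..t, |f s|) ^ a ≤ D * t ^ a :=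
        mul_le_mul hcD h2 (Real.rpow_nonneg h0 a) hD0.le
      rw [hξone]
      linarith
    | succ n ih =>
      intro t ht
      obtain ⟨ht0, htT⟩ := ht
      rcases eq_or_lt_of_le ht0 with heq | htpos
      · rw [← heq]
        simp only [mul_zero, sub_self, abs_zero]
        rw [Real.zero_rpow (hξapos (n + 1)).ne']
        have hs1 : ∑ j ∈ Finset.range (n + 1), F ^ (a ^ (j + 1)) * (0:ℝ) ^ (ξ (j + 1)) = 0 := by
          apply Finset.sum_eq_zero
          intro j _
          rw [Real.zero_rpow (hξapos j).ne', mul_zero]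
        have hs2 : ∑ j ∈ Finset.range (n + 1),
            (b / 2) ^ (a ^ (j + 1)) * (0:ℝ) ^ (ξ (j + 1) + a ^ (j + 1)) = 0 := by
          apply Finset.sum_eq_zero
          intro j _
          have hpos : (0:ℝ) < ξ (j + 1) + a ^ (j + 1) := by
            have := hξapos j
            have := pow_pos ha0 (j + 1)
            linarith
          rw [Real.zero_rpow hpos.ne', mul_zero]
        rw [hs1, hs2]
        simp
      · set S1 : ℝ := ∑ j ∈ Finset.range n, F ^ (a ^ (j + 1)) * t ^ (ξ (j + 1)) with hS1def
        set S2 : ℝ := ∑ j ∈ Finset.range n,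
          (b / 2) ^ (a ^ (j + 1)) * t ^ (ξ (j + 1) + a ^ (j + 1)) with hS2def
        set K : ℝ := D * S1 + D * S2 + D * t ^ (ξ (n + 1)) with hKdef
        have hb2 : (0:ℝ) ≤ b / 2 := by linarith
        have hS1nn : 0 ≤ S1 := Finset.sum_nonneg fun j _ =>
          mul_nonneg (Real.rpow_nonneg hF _) (Real.rpow_nonneg ht0 _)
        have hS2nn : 0 ≤ S2 := Finset.sum_nonneg fun j _ =>
          mul_nonneg (Real.rpow_nonneg hb2 _) (Real.rpow_nonneg ht0 _)
        have hKnn : 0 ≤ K := by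
          rw [hKdef]
          exact add_nonneg (add_nonneg (mul_nonneg hD0.le hS1nn) (mul_nonneg hD0.le hS2nn))
            (mul_nonneg hD0.le (Real.rpow_nonneg ht0 _))
        have hpt : ∀ s ∈ Set.Icc (0:ℝ) t, |f s| ≤ F + (b * s + K) := by
          intro s hs
          have hsT : s ∈ Set.Icc (0:ℝ) T := ⟨hs.1, hs.2.trans htT⟩
          have h1 := ih s hsT
          have h2 : |f s| ≤ F + |f s - f 0| := by
            rw [hFdef]
            have h7 := abs_add_le (f 0) (f s - f 0)
            simpa using h7
          have hb1 : ∑ j ∈ Finset.range n, F ^ (a ^ (j + 1)) * s ^ (ξ (j + 1)) ≤ S1 := by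
            rw [hS1def]
            apply Finset.sum_le_sum
            intro j _
            exact mul_le_mul_of_nonneg_left
              (Real.rpow_le_rpow hs.1 hs.2 (hξnn _)) (Real.rpow_nonneg hF _)
          have hb2' : ∑ j ∈ Finset.range n,
              (b / 2) ^ (a ^ (j + 1)) * s ^ (ξ (j + 1) + a ^ (j + 1)) ≤ S2 := by
            rw [hS2def]
            apply Finset.sum_le_sum
            intro j _
            exact mul_le_mul_of_nonneg_left
              (Real.rpow_le_rpow hs.1 hs.2
                (add_nonneg (hξnn _) (pow_nonneg ha0.le _)))
              (Real.rpow_nonneg hb2 _)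
          have hb3 : s ^ (ξ (n + 1)) ≤ t ^ (ξ (n + 1)) :=
            Real.rpow_le_rpow hs.1 hs.2 (hξnn _)
          have e1 := mul_le_mul_of_nonneg_left hb1 hD0.le
          have e2 := mul_le_mul_of_nonneg_left hb2' hD0.le
          have e3 := mul_le_mul_of_nonneg_left hb3 hD0.le
          rw [hKdef]
          calc |f s| ≤ F + |f s - f 0| := h2
            _ ≤ F + (b * s
                + D * ∑ j ∈ Finset.range n, F ^ (a ^ (j + 1)) * s ^ (ξ (j + 1))
                + D * ∑ j ∈ Finset.range n,
                    (b / 2) ^ (a ^ (j + 1)) * s ^ (ξ (j + 1) + a ^ (j + 1))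
                + D * s ^ (ξ (n + 1))) := by linarith [h1]
            _ ≤ F + (b * s + (D * S1 + D * S2 + D * t ^ (ξ (n + 1)))) := by
                have q := add_le_add (add_le_add (add_le_add (le_refl (b * s)) e1) e2) e3
                linarith [q]
        have hintg : IntervalIntegrable (fun s => F + (b * s + K)) volume 0 t :=
          (continuous_const.add ((continuous_const.mul continuous_id).add
            continuous_const)).intervalIntegrable 0 t
        have hIle : ∫ s in (0:ℝ)..t, |f s| ≤ F * t + (b * (t ^ 2 / 2) + K * t) := by
          have h1 := intervalIntegral.integral_mono_on ht0 (hintf t ⟨ht0, htT⟩) hintg hpt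
          have h2 : ∫ s in (0:ℝ)..t, (F + (b * s + K)) = F * t + (b * (t ^ 2 / 2) + K * t) := by
            have hfun : (fun s => F + (b * s + K)) = fun s : ℝ => b * s + (F + K) := by
              funext s; ring
            rw [hfun, intervalIntegral.integral_add (f := fun s : ℝ => b * s) (g := fun _ : ℝ => F + K)
              ((continuous_const.mul continuous_id' : Continuous fun s : ℝ => b * s).intervalIntegrable 0 t)
              intervalIntegrable_const,
              intervalIntegral.integral_const_mul, integral_id,
              intervalIntegral.integral_const]
            simp only [smul_eq_mul]
            ring
          rw [h2] at h1
          exact h1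
        have hI0 : 0 ≤ ∫ s in (0:ℝ)..t, |f s| :=
          intervalIntegral.integral_nonneg ht0 fun s _ => abs_nonneg _
        have hbthalf : (0:ℝ) ≤ b * (t ^ 2 / 2) :=
          mul_nonneg hb (by positivity)
        have hXnn : (0:ℝ) ≤ F * t + (b * (t ^ 2 / 2) + K * t) :=
          add_nonneg (mul_nonneg hF ht0)
            (add_nonneg hbthalf (mul_nonneg hKnn ht0))
        have hsplit : (F * t + (b * (t ^ 2 / 2) + K * t)) ^ a
            ≤ F ^ a * t ^ a + (b / 2) ^ a * t ^ (2 * a) + K ^ a * t ^ a := by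
          have hy : (0:ℝ) ≤ b * (t ^ 2 / 2) + K * t :=
            add_nonneg hbthalf (mul_nonneg hKnn ht0)
          have hbt2 : (0:ℝ) ≤ b * (t ^ 2 / 2) := hbthalf
          have h1 := rpow_add_le_aux (mul_nonneg hF ht0) hy ha0.le ha1.le
          have h2 := rpow_add_le_aux hbt2 (mul_nonneg hKnn ht0) ha0.le ha1.le
          have e1 : (F * t) ^ a = F ^ a * t ^ a := Real.mul_rpow hF ht0
          have e3 : (K * t) ^ a = K ^ a * t ^ a := Real.mul_rpow hKnn ht0
          have e2 : (b * (t ^ 2 / 2)) ^ a = (b / 2) ^ a * t ^ (2 * a) := by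
            have hbt : b * (t ^ 2 / 2) = (b / 2) * t ^ (2:ℕ) := by ring
            rw [hbt, Real.mul_rpow hb2 (by positivity),
              ← Real.rpow_natCast t 2, ← Real.rpow_mul ht0]
            norm_num
          rw [e1] at h1
          rw [e2, e3] at h2
          calc (F * t + (b * (t ^ 2 / 2) + K * t)) ^ a
              ≤ F ^ a * t ^ a + (b * (t ^ 2 / 2) + K * t) ^ a := h1
            _ ≤ F ^ a * t ^ a + ((b / 2) ^ a * t ^ (2 * a) + K ^ a * t ^ a) := by linarith
            _ = F ^ a * t ^ a + (b / 2) ^ a * t ^ (2 * a) + K ^ a * t ^ a := by ring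
        set B1 : ℝ := ∑ j ∈ Finset.range n, F ^ (a ^ (j + 1) * a) * t ^ (ξ (j + 1) * a)
          with hB1def
        set B2 : ℝ := ∑ j ∈ Finset.range n,
          (b / 2) ^ (a ^ (j + 1) * a) * t ^ ((ξ (j + 1) + a ^ (j + 1)) * a) with hB2def
        have hB1nn : 0 ≤ B1 := Finset.sum_nonneg fun j _ =>
          mul_nonneg (Real.rpow_nonneg hF _) (Real.rpow_nonneg ht0 _)
        have hB2nn : 0 ≤ B2 := Finset.sum_nonneg fun j _ =>
          mul_nonneg (Real.rpow_nonneg hb2 _) (Real.rpow_nonneg ht0 _)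
        have hDa0 : 0 ≤ D ^ a := Real.rpow_nonneg hD0.le _
        have hS1a : S1 ^ a ≤ B1 := by
          rw [hS1def, hB1def]
          have h3 := sum_rpow_le_aux (Finset.range n)
            (fun j => F ^ (a ^ (j + 1)) * t ^ (ξ (j + 1))) ha0 ha1.le
            (fun j _ => mul_nonneg (Real.rpow_nonneg hF _) (Real.rpow_nonneg ht0 _))
          refine h3.trans (le_of_eq (Finset.sum_congr rfl fun j _ => ?_))
          rw [Real.mul_rpow (Real.rpow_nonneg hF _) (Real.rpow_nonneg ht0 _),
            ← Real.rpow_mul hF, ← Real.rpow_mul ht0]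
        have hS2a : S2 ^ a ≤ B2 := by
          rw [hS2def, hB2def]
          have h3 := sum_rpow_le_aux (Finset.range n)
            (fun j => (b / 2) ^ (a ^ (j + 1)) * t ^ (ξ (j + 1) + a ^ (j + 1))) ha0 ha1.le
            (fun j _ => mul_nonneg (Real.rpow_nonneg hb2 _) (Real.rpow_nonneg ht0 _))
          refine h3.trans (le_of_eq (Finset.sum_congr rfl fun j _ => ?_))
          rw [Real.mul_rpow (Real.rpow_nonneg hb2 _) (Real.rpow_nonneg ht0 _),
            ← Real.rpow_mul hb2, ← Real.rpow_mul ht0]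
        have hKa : K ^ a ≤ D ^ a * B1 + D ^ a * B2 + D ^ a * t ^ (ξ (n + 1) * a) := by
          rw [hKdef]
          have h1 := rpow_add_le_aux (x := D * S1 + D * S2) (y := D * t ^ (ξ (n + 1)))
            (add_nonneg (mul_nonneg hD0.le hS1nn) (mul_nonneg hD0.le hS2nn))
            (mul_nonneg hD0.le (Real.rpow_nonneg ht0 (ξ (n + 1)))) ha0.le ha1.le
          have h2 := rpow_add_le_aux (mul_nonneg hD0.le hS1nn)
            (mul_nonneg hD0.le hS2nn) ha0.le ha1.le
          have e1 : (D * S1) ^ a = D ^ a * S1 ^ a := Real.mul_rpow hD0.le hS1nn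
          have e2 : (D * S2) ^ a = D ^ a * S2 ^ a := Real.mul_rpow hD0.le hS2nn
          have e3 : (D * t ^ (ξ (n + 1))) ^ a = D ^ a * t ^ (ξ (n + 1) * a) := by
            rw [Real.mul_rpow hD0.le (Real.rpow_nonneg ht0 _), ← Real.rpow_mul ht0]
          rw [e1, e2] at h2
          rw [e3] at h1
          have h4 := mul_le_mul_of_nonneg_left hS1a hDa0
          have h5 := mul_le_mul_of_nonneg_left hS2a hDa0
          calc (D * S1 + D * S2 + D * t ^ (ξ (n + 1))) ^ a
              ≤ (D * S1 + D * S2) ^ a + D ^ a * t ^ (ξ (n + 1) * a) := h1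
            _ ≤ D ^ a * S1 ^ a + D ^ a * S2 ^ a + D ^ a * t ^ (ξ (n + 1) * a) := by linarith
            _ ≤ D ^ a * B1 + D ^ a * B2 + D ^ a * t ^ (ξ (n + 1) * a) := by linarith
        have hta : 0 ≤ t ^ a := Real.rpow_nonneg ht0 a
        have hB1t : B1 * t ^ a = ∑ j ∈ Finset.range n, F ^ (a ^ (j + 2)) * t ^ (ξ (j + 2)) := by
          rw [hB1def, Finset.sum_mul]
          refine Finset.sum_congr rfl fun j _ => ?_
          have exp1 : a ^ (j + 1) * a = a ^ (j + 2) := by ring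
          have exp2 : ξ (j + 1) * a + a = ξ (j + 2) := by
            calc ξ (j + 1) * a + a = a + a * ξ (j + 1) := by ring
              _ = ξ (j + 1 + 1) := (hξstep (j + 1)).symm
              _ = ξ (j + 2) := rfl
          rw [mul_assoc, ← Real.rpow_add htpos, exp1, exp2]
        have hB2t : B2 * t ^ a = ∑ j ∈ Finset.range n,
            (b / 2) ^ (a ^ (j + 2)) * t ^ (ξ (j + 2) + a ^ (j + 2)) := by
          rw [hB2def, Finset.sum_mul]
          refine Finset.sum_congr rfl fun j _ => ?_
          have exp1 : a ^ (j + 1) * a = a ^ (j + 2) := by ring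
          have exp2 : (ξ (j + 1) + a ^ (j + 1)) * a + a = ξ (j + 2) + a ^ (j + 2) := by
            calc (ξ (j + 1) + a ^ (j + 1)) * a + a
                = (a + a * ξ (j + 1)) + a ^ (j + 1) * a := by ring
              _ = ξ (j + 1 + 1) + a ^ (j + 2) := by rw [← hξstep (j + 1)]; ring
              _ = ξ (j + 2) + a ^ (j + 2) := rfl
          rw [mul_assoc, ← Real.rpow_add htpos, exp1, exp2]
        have hB3t : t ^ (ξ (n + 1) * a) * t ^ a = t ^ (ξ (n + 2)) := by
          have exp2 : ξ (n + 1) * a + a = ξ (n + 2) := by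
            calc ξ (n + 1) * a + a = a + a * ξ (n + 1) := by ring
              _ = ξ (n + 1 + 1) := (hξstep (n + 1)).symm
              _ = ξ (n + 2) := rfl
          rw [← Real.rpow_add htpos, exp2]
        have hKt : K ^ a * t ^ a ≤ D ^ a * (B1 * t ^ a) + D ^ a * (B2 * t ^ a)
            + D ^ a * (t ^ (ξ (n + 1) * a) * t ^ a) := by
          calc K ^ a * t ^ a
              ≤ (D ^ a * B1 + D ^ a * B2 + D ^ a * t ^ (ξ (n + 1) * a)) * t ^ a :=
                mul_le_mul_of_nonneg_right hKa hta
            _ = D ^ a * (B1 * t ^ a) + D ^ a * (B2 * t ^ a)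
                + D ^ a * (t ^ (ξ (n + 1) * a) * t ^ a) := by ring
        have hcKt : c * (K ^ a * t ^ a)
            ≤ D * (B1 * t ^ a) + D * (B2 * t ^ a) + D * (t ^ (ξ (n + 1) * a) * t ^ a) := by
          have hB1t0 : 0 ≤ B1 * t ^ a := mul_nonneg hB1nn hta
          have hB2t0 : 0 ≤ B2 * t ^ a := mul_nonneg hB2nn hta
          have hB3t0 : 0 ≤ t ^ (ξ (n + 1) * a) * t ^ a :=
            mul_nonneg (Real.rpow_nonneg ht0 _) hta
          have u1 := mul_le_mul_of_nonneg_right hcDa hB1t0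
          have u2 := mul_le_mul_of_nonneg_right hcDa hB2t0
          have u3 := mul_le_mul_of_nonneg_right hcDa hB3t0
          calc c * (K ^ a * t ^ a)
              ≤ c * (D ^ a * (B1 * t ^ a) + D ^ a * (B2 * t ^ a)
                  + D ^ a * (t ^ (ξ (n + 1) * a) * t ^ a)) :=
                mul_le_mul_of_nonneg_left hKt hc
            _ = (c * D ^ a) * (B1 * t ^ a) + (c * D ^ a) * (B2 * t ^ a)
                + (c * D ^ a) * (t ^ (ξ (n + 1) * a) * t ^ a) := by ring
            _ ≤ D * (B1 * t ^ a) + D * (B2 * t ^ a)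
                + D * (t ^ (ξ (n + 1) * a) * t ^ a) := by linarith
        have hsum1 : ∑ j ∈ Finset.range (n + 1), F ^ (a ^ (j + 1)) * t ^ (ξ (j + 1))
            = (∑ j ∈ Finset.range n, F ^ (a ^ (j + 2)) * t ^ (ξ (j + 2))) + F ^ a * t ^ a := by
          rw [Finset.sum_range_succ' (fun j => F ^ (a ^ (j + 1)) * t ^ (ξ (j + 1))) n]
          congr 1
          have h1 : (0 + 1 : ℕ) = 1 := rfl
          rw [h1, hξone, pow_one]
        have hsum2 : ∑ j ∈ Finset.range (n + 1),
              (b / 2) ^ (a ^ (j + 1)) * t ^ (ξ (j + 1) + a ^ (j + 1))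
            = (∑ j ∈ Finset.range n, (b / 2) ^ (a ^ (j + 2)) * t ^ (ξ (j + 2) + a ^ (j + 2)))
              + (b / 2) ^ a * t ^ (2 * a) := by
          rw [Finset.sum_range_succ'
            (fun j => (b / 2) ^ (a ^ (j + 1)) * t ^ (ξ (j + 1) + a ^ (j + 1))) n]
          congr 1
          have h1 : (0 + 1 : ℕ) = 1 := rfl
          rw [h1, hξone, pow_one, show a + a = 2 * a from by ring]
        have hX1 : 0 ≤ F ^ a * t ^ a := mul_nonneg (Real.rpow_nonneg hF _) hta
        have hX2 : 0 ≤ (b / 2) ^ a * t ^ (2 * a) :=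
          mul_nonneg (Real.rpow_nonneg hb2 _) (Real.rpow_nonneg ht0 _)
        have v1 := mul_le_mul_of_nonneg_right hcD hX1
        have v2 := mul_le_mul_of_nonneg_right hcD hX2
        have hIa : (∫ s in (0:ℝ)..t, |f s|) ^ a
            ≤ F ^ a * t ^ a + (b / 2) ^ a * t ^ (2 * a) + K ^ a * t ^ a :=
          (Real.rpow_le_rpow hI0 hIle ha0.le).trans hsplit
        have hmain := hineq t ⟨ht0, htT⟩
        have hcI := mul_le_mul_of_nonneg_left hIa hc
        rw [hsum1, hsum2, hB1t, hB2t, hB3t] at *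
        calc |f t - f 0| ≤ b * t + c * (∫ s in (0:ℝ)..t, |f s|) ^ a := hmain
          _ ≤ b * t + c * (F ^ a * t ^ a + (b / 2) ^ a * t ^ (2 * a) + K ^ a * t ^ a) := by
              linarith
          _ = b * t + c * (F ^ a * t ^ a) + c * ((b / 2) ^ a * t ^ (2 * a))
              + c * (K ^ a * t ^ a) := by ring
          _ ≤ b * t + D * (F ^ a * t ^ a) + D * ((b / 2) ^ a * t ^ (2 * a))
              + (D * (∑ j ∈ Finset.range n, F ^ (a ^ (j + 2)) * t ^ (ξ (j + 2)))
                + D * (∑ j ∈ Finset.range n,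
                    (b / 2) ^ (a ^ (j + 2)) * t ^ (ξ (j + 2) + a ^ (j + 2)))
                + D * t ^ (ξ (n + 2))) := by
              have q := add_le_add (add_le_add (add_le_add (le_refl (b * t)) v1) v2) hcKt
              linarith [q]
          _ = b * t
              + D * ((∑ j ∈ Finset.range n, F ^ (a ^ (j + 2)) * t ^ (ξ (j + 2)))
                  + F ^ a * t ^ a)
              + D * ((∑ j ∈ Finset.range n,
                    (b / 2) ^ (a ^ (j + 2)) * t ^ (ξ (j + 2) + a ^ (j + 2)))
                  + (b / 2) ^ a * t ^ (2 * a))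
              + D * t ^ (ξ (n + 2)) := by ring
  -- conclusion
  intro t ht
  obtain ⟨ht0, htT⟩ := ht
  have hN2' : ξ' < ξ (N' + 1) := by
    have h9 := hN2
    rw [sum_Icc_conv (N' + 1) (fun j => a ^ j)] at h9
    simpa [hξdef] using h9
  rcases eq_or_lt_of_le ht0 with heq | htpos
  · rw [← heq]
    rw [Real.zero_rpow ha0.ne', Real.zero_rpow hξ.1.ne']
    simp
  · have ht1 : t ≤ 1 := htT.trans hT1
    have h1 := key N' t ⟨ht0, htT⟩
    have hA : ∑ j ∈ Finset.range N', F ^ (a ^ (j + 1)) * t ^ (ξ (j + 1))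
        ≤ (∑ j ∈ Finset.range N', F ^ (a ^ (j + 1))) * t ^ a := by
      rw [Finset.sum_mul]
      apply Finset.sum_le_sum
      intro j _
      exact mul_le_mul_of_nonneg_left
        (Real.rpow_le_rpow_of_exponent_ge htpos ht1 (hξa j)) (Real.rpow_nonneg hF _)
    have hB : ∑ j ∈ Finset.range N', (b / 2) ^ (a ^ (j + 1)) * t ^ (ξ (j + 1) + a ^ (j + 1))
        ≤ (∑ j ∈ Finset.range N', (b / 2) ^ (a ^ (j + 1))) * t ^ ξ' := by
      rw [Finset.sum_mul]
      apply Finset.sum_le_sum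
      intro j hj
      have hjN : j + 1 ≤ N' := Finset.mem_range.mp hj
      have hexp : ξ' ≤ ξ (j + 1) + a ^ (j + 1) := le_trans hN2'.le (htail (j + 1) hjN)
      exact mul_le_mul_of_nonneg_left
        (Real.rpow_le_rpow_of_exponent_ge htpos ht1 hexp)
        (Real.rpow_nonneg (by linarith : (0:ℝ) ≤ b / 2) _)
    have hR : t ^ (ξ (N' + 1)) ≤ t ^ ξ' :=
      Real.rpow_le_rpow_of_exponent_ge htpos ht1 hN2'.le
    have hbt : b * t ≤ b * t ^ ξ' := by
      have h2 : t ^ (1:ℝ) ≤ t ^ ξ' :=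
        Real.rpow_le_rpow_of_exponent_ge htpos ht1 hξ.2.le
      rw [Real.rpow_one] at h2
      exact mul_le_mul_of_nonneg_left h2 hb
    rw [sum_Icc_conv N' (fun j => F ^ (a ^ j)), sum_Icc_conv N' (fun j => (b / 2) ^ (a ^ j))]
    have e1 := mul_le_mul_of_nonneg_left hA hD0.le
    have e2 := mul_le_mul_of_nonneg_left hB hD0.le
    have e3 := mul_le_mul_of_nonneg_left hR hD0.le
    calc |f t - f 0| ≤ b * t
          + D * ∑ j ∈ Finset.range N', F ^ (a ^ (j + 1)) * t ^ (ξ (j + 1))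
          + D * ∑ j ∈ Finset.range N',
              (b / 2) ^ (a ^ (j + 1)) * t ^ (ξ (j + 1) + a ^ (j + 1))
          + D * t ^ (ξ (N' + 1)) := h1
      _ ≤ b * t ^ ξ' + D * ((∑ j ∈ Finset.range N', F ^ (a ^ (j + 1))) * t ^ a)
          + D * ((∑ j ∈ Finset.range N', (b / 2) ^ (a ^ (j + 1))) * t ^ ξ')
          + D * t ^ ξ' := by
            have q := add_le_add (add_le_add (add_le_add hbt e1) e2) e3
            linarith [q]
      _ = (D * ∑ j ∈ Finset.range N', F ^ (a ^ (j + 1))) * t ^ a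
          + (b + D * (∑ j ∈ Finset.range N', (b / 2) ^ (a ^ (j + 1))) + D) * t ^ ξ' := by
            ring
      _ = (D * ∑ j ∈ Finset.range N', F ^ (a ^ (j + 1))) * t ^ a
          + (b + D * (∑ j ∈ Finset.range N', (b / 2) ^ (a ^ (j + 1)))
              + c ^ ((1:ℝ) / (1 - a)) + 1) * t ^ ξ' := by
            rw [hDdef]
            ring
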